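/- Suppose D is even. Let 𝐄_0, …, 𝐄_D ∈ Mat_{𝔽₂^D}(ℂ) satisfy Σ_{i=0}^D 𝐄_i = I and 𝐀·𝐄_i = (D−2i)·𝐄_i for all i, and let E_0, …, E_{D/2} ∈ Mat_X(ℂ) satisfy Σ_i E_i = I and A·E_i = θ_i·E_i for all i, where θ_i = ((D−2i)² − D)/2. Then for each 0 ≤ i ≤ D/2 − 1 the matrix E_i equals the submatrix of 𝐄_i + 𝐄_{D−i} obtained by restricting rows and columns to X, and E_{D/2} equals the submatrix of 𝐄_{D/2} restricted to X. -/

import Mathlib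

open Matrix

/-- Vertex set of the hypercube `H(D,2)`: binary words of length `D`. -/
abbrev Vtx (D : ℕ) := Fin D → ZMod 2

/-- Vertex set of the halved cube: binary words of even Hamming weight. -/
abbrev HVtx (D : ℕ) := {x : Vtx D // Even (hammingNorm x)}

/-- Adjacency matrix of the hypercube `H(D,2)`. -/
noncomputable def adjCube (D : ℕ) : Matrix (Vtx D) (Vtx D) ℂ :=
  fun y z => if hammingNorm (y - z) = 1 then 1 else 0

/-- Adjacency matrix of the halved cube `½H(D,2)`. -/
noncomputable def adjHalf (D : ℕ) : Matrix (HVtx D) (HVtx D) ℂ :=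
  fun y z => if hammingNorm (y.val - z.val) = 2 then 1 else 0

/-! ### Auxiliary lemmas -/

lemma zmod2_ne_zero : ∀ a : ZMod 2, a ≠ 0 → a = 1 := by decide

lemma norm_cast_eq_sum {D : ℕ} (x : Vtx D) : (hammingNorm x : ZMod 2) = ∑ i, x i := by
  rw [hammingNorm, Finset.card_eq_sum_ones, Nat.cast_sum]
  rw [← Finset.sum_filter_add_sum_filter_not Finset.univ (fun i => x i ≠ 0) (fun i => x i)]
  have h1 : ∀ i ∈ Finset.univ.filter (fun i => x i ≠ 0), x i = 1 := by
    intro i hi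
    simp only [Finset.mem_filter] at hi
    exact zmod2_ne_zero _ hi.2
  have h2 : ∀ i ∈ Finset.univ.filter (fun i => ¬ x i ≠ 0), x i = 0 := by
    intro i hi
    simp only [Finset.mem_filter, not_not] at hi
    exact hi.2
  rw [Finset.sum_congr rfl h1, Finset.sum_congr rfl h2]
  simp

lemma parity_sub {D : ℕ} (y x : Vtx D) (h2 : Even (hammingNorm (y - x)))
    (hy : Even (hammingNorm y)) : Even (hammingNorm x) := by
  have key : (hammingNorm (y - x) : ZMod 2)
      = (hammingNorm y : ZMod 2) + (hammingNorm x : ZMod 2) := by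
    rw [norm_cast_eq_sum, norm_cast_eq_sum, norm_cast_eq_sum, ← Finset.sum_add_distrib]
    apply Finset.sum_congr rfl
    intro i _
    simp [Pi.sub_apply, sub_eq_add_neg]
  have e0 : ∀ n : ℕ, Even n ↔ (n : ZMod 2) = 0 := by
    intro n
    rw [even_iff_two_dvd]
    exact (ZMod.natCast_eq_zero_iff n 2).symm
  rw [e0] at h2 hy ⊢
  rw [key, hy, zero_add] at h2
  exact h2

lemma norm_one_iff {D : ℕ} (u : Vtx D) :
    hammingNorm u = 1 ↔ ∃ k, u = (Pi.single k 1 : Vtx D) := by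
  constructor
  · intro h
    rw [hammingNorm, Finset.card_eq_one] at h
    obtain ⟨k, hk⟩ := h
    refine ⟨k, funext fun i => ?_⟩
    by_cases hik : i = k
    · subst hik
      have hi : i ∈ ({i} : Finset (Fin D)) := Finset.mem_singleton_self i
      rw [← hk] at hi
      simp only [Finset.mem_filter] at hi
      rw [zmod2_ne_zero _ hi.2, Pi.single_eq_same]
    · have : i ∉ ({k} : Finset (Fin D)) := by simp [hik]
      rw [← hk] at this
      simp only [Finset.mem_filter, Finset.mem_univ, true_and, not_not] at this
      rw [this, Pi.single_eq_of_ne hik]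
  · rintro ⟨k, rfl⟩
    rw [hammingNorm]
    have : ({i | (Pi.single k 1 : Vtx D) i ≠ 0} : Finset (Fin D)) = {k} := by
      ext i
      by_cases hik : i = k <;> simp [hik, Pi.single_eq_of_ne]
    rw [this, Finset.card_singleton]

lemma norm_flip {D : ℕ} (v : Vtx D) (k : Fin D) :
    hammingNorm (v + (Pi.single k 1 : Vtx D)) =
      if v k = 0 then hammingNorm v + 1 else hammingNorm v - 1 := by
  classical
  have happ : ∀ i, (v + (Pi.single k 1 : Vtx D)) i = if i = k then v k + 1 else v i := by
    intro i
    by_cases hik : i = k <;> simp [hik, Pi.single_eq_of_ne]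
  by_cases hv : v k = 0
  · rw [if_pos hv, hammingNorm, hammingNorm]
    have : ({i | (v + (Pi.single k 1 : Vtx D)) i ≠ 0} : Finset (Fin D))
        = insert k ({i | v i ≠ 0} : Finset (Fin D)) := by
      ext i
      by_cases hik : i = k <;> simp [happ i, hik, hv]
    rw [this, Finset.card_insert_of_notMem (by simp [hv])]
  · rw [if_neg hv, hammingNorm, hammingNorm]
    have hv1 : v k = 1 := zmod2_ne_zero _ hv
    have : ({i | (v + (Pi.single k 1 : Vtx D)) i ≠ 0} : Finset (Fin D))
        = ({i | v i ≠ 0} : Finset (Fin D)).erase k := by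
      ext i
      by_cases hik : i = k
      · simp only [Finset.mem_erase, hik, happ, if_pos rfl, hv1, Finset.mem_filter,
          Finset.mem_univ, true_and]
        constructor
        · intro h; exact absurd (by decide : (1:ZMod 2)+1 = 0) h
        · rintro ⟨h, -⟩; exact absurd rfl h
      · simp [happ i, hik]
    rw [this, Finset.card_erase_of_mem (by simp [hv])]

lemma single_add_self {D : ℕ} (k : Fin D) :
    (Pi.single k 1 : Vtx D) + Pi.single k 1 = 0 := by
  funext i
  by_cases hik : i = k <;> simp [hik, Pi.single_eq_of_ne]
  decide

lemma neg_single {D : ℕ} (k : Fin D) :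
    -(Pi.single k 1 : Vtx D) = Pi.single k 1 :=
  neg_eq_of_add_eq_zero_left (single_add_self k)

lemma single_inj {D : ℕ} {k k' : Fin D}
    (h : (Pi.single k 1 : Vtx D) = Pi.single k' 1) : k = k' := by
  by_contra hkk
  have := congrFun h k
  rw [Pi.single_eq_same, Pi.single_eq_of_ne hkk] at this
  exact one_ne_zero this

lemma count_key (D : ℕ) (y z : Vtx D) :
    (Finset.univ.filter fun x : Vtx D =>
        hammingNorm (y - x) = 1 ∧ hammingNorm (x - z) = 1).card =
      (if hammingNorm (y - z) = 2 then 2 else 0) + (if y = z then D else 0) := by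
  classical
  set T : Finset (Fin D) :=
    Finset.univ.filter (fun k => hammingNorm (y - z + (Pi.single k 1 : Vtx D)) = 1) with hT
  have himg : (Finset.univ.filter fun x : Vtx D =>
      hammingNorm (y - x) = 1 ∧ hammingNorm (x - z) = 1)
      = T.image (fun k => y + (Pi.single k 1 : Vtx D)) := by
    ext x
    simp only [Finset.mem_filter, Finset.mem_univ, true_and, Finset.mem_image, hT]
    constructor
    · rintro ⟨h1, h2⟩
      obtain ⟨k, hk⟩ := (norm_one_iff _).mp h1
      have hx : x = y + (Pi.single k 1 : Vtx D) := by
        have : x = y - (Pi.single k 1 : Vtx D) := by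
          rw [← hk]; abel
        rw [this, sub_eq_add_neg, neg_single]
      refine ⟨k, ?_, hx.symm⟩
      have : x - z = y - z + (Pi.single k 1 : Vtx D) := by rw [hx]; abel
      rw [← this]; exact h2
    · rintro ⟨k, hk, rfl⟩
      constructor
      · have : y - (y + (Pi.single k 1 : Vtx D)) = -(Pi.single k 1 : Vtx D) := by abel
        rw [this, neg_single]
        exact (norm_one_iff _).mpr ⟨k, rfl⟩
      · have : y + (Pi.single k 1 : Vtx D) - z = y - z + (Pi.single k 1 : Vtx D) := by abel
        rw [this]; exact hk
  rw [himg, Finset.card_image_of_injective _ (fun k k' h => single_inj (by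
    have := h; exact add_left_cancel this))]
  by_cases hyz : y = z
  · have hv : y - z = 0 := by rw [hyz, sub_self]
    have hTuniv : T = Finset.univ := by
      ext k
      simp only [hT, Finset.mem_filter, Finset.mem_univ, true_and, iff_true]
      rw [hv, norm_flip]
      simp [hammingNorm_zero]
    rw [hTuniv, hv]
    simp [hyz, Finset.card_univ]
  · have hvne : hammingNorm (y - z) ≠ 0 := by
      rw [Ne, hammingNorm_eq_zero, sub_eq_zero]; exact hyz
    by_cases h2 : hammingNorm (y - z) = 2
    · have hTsupp : T = Finset.univ.filter (fun k => (y - z) k ≠ 0) := by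
        ext k
        simp only [hT, Finset.mem_filter, Finset.mem_univ, true_and]
        rw [norm_flip, h2]
        by_cases hk : (y - z) k = 0 <;> simp [hk]
      rw [hTsupp]
      have : (Finset.univ.filter (fun k => (y - z) k ≠ 0)).card = hammingNorm (y - z) := rfl
      rw [this, h2]
      simp [h2, hyz]
    · have hTempty : T = ∅ := by
        ext k
        simp only [hT, Finset.mem_filter, Finset.mem_univ, true_and,
          Finset.notMem_empty, iff_false]
        rw [norm_flip]
        by_cases hk : (y - z) k = 0
        · simp only [if_pos hk]
          omega
        · simp only [if_neg hk]
          omega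
      rw [hTempty]
      simp [h2, hyz]

/-- The distance-2 adjacency matrix of the hypercube. -/
noncomputable def Bmat (D : ℕ) : Matrix (Vtx D) (Vtx D) ℂ :=
  fun y z => if hammingNorm (y - z) = 2 then 1 else 0

lemma adjCube_sq (D : ℕ) :
    adjCube D * adjCube D = (2 : ℂ) • Bmat D + (D : ℂ) • 1 := by
  classical
  ext y z
  rw [Matrix.mul_apply]
  simp only [adjCube, Matrix.add_apply, Matrix.smul_apply, Bmat, Matrix.one_apply,
    smul_eq_mul]
  have hterm : ∀ x : Vtx D,
      (if hammingNorm (y - x) = 1 then (1:ℂ) else 0) *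
        (if hammingNorm (x - z) = 1 then (1:ℂ) else 0) =
      if hammingNorm (y - x) = 1 ∧ hammingNorm (x - z) = 1 then 1 else 0 := by
    intro x
    by_cases h1 : hammingNorm (y - x) = 1 <;>
      by_cases h2 : hammingNorm (x - z) = 1 <;> simp [h1, h2]
  rw [Finset.sum_congr rfl (fun x _ => hterm x), Finset.sum_boole]
  rw [count_key D y z]
  push_cast
  by_cases h2 : hammingNorm (y - z) = 2 <;> by_cases hyz : y = z <;> simp [h2, hyz]

lemma aeval_mul_eig {n : Type*} [Fintype n] [DecidableEq n]
    (M N : Matrix n n ℂ) (μ : ℂ) (h : M * N = μ • N) (p : Polynomial ℂ) :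
    (Polynomial.aeval M p) * N = p.eval μ • N := by
  induction p using Polynomial.induction_on with
  | C a =>
    simp [Polynomial.aeval_C, Algebra.algebraMap_eq_smul_one, smul_mul_assoc]
  | add p q hp hq =>
    simp [map_add, add_mul, hp, hq, add_smul]
  | monomial m a ih =>
    have : (Polynomial.aeval M) (Polynomial.C a * Polynomial.X ^ (m + 1))
        = (Polynomial.aeval M) (Polynomial.C a * Polynomial.X ^ m) * M := by
      rw [_root_.map_mul, _root_.map_mul, map_pow, map_pow, pow_succ,
        Polynomial.aeval_X, mul_assoc]
    rw [this, mul_assoc, h, Matrix.mul_smul, ih, smul_smul]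
    congr 1
    simp [Polynomial.eval_mul, Polynomial.eval_pow, pow_succ]
    ring

lemma unique_family {n : Type*} [Fintype n] [DecidableEq n]
    (M : Matrix n n ℂ) (N : ℕ) (θ : ℕ → ℂ)
    (hθ : ∀ i ≤ N, ∀ j ≤ N, θ i = θ j → i = j)
    (E F : ℕ → Matrix n n ℂ)
    (hE : ∑ i ∈ Finset.range (N + 1), E i = 1)
    (hF : ∑ i ∈ Finset.range (N + 1), F i = 1)
    (eigE : ∀ i ≤ N, M * E i = θ i • E i)
    (eigF : ∀ i ≤ N, M * F i = θ i • F i) :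
    ∀ i ≤ N, E i = F i := by
  classical
  intro i hi
  set s : Finset ℕ := (Finset.range (N + 1)).erase i with hs
  set p : Polynomial ℂ := ∏ j ∈ s, (Polynomial.X - Polynomial.C (θ j)) with hp
  set c : ℂ := ∏ j ∈ s, (θ i - θ j) with hc
  have hcne : c ≠ 0 := by
    rw [hc]
    apply Finset.prod_ne_zero_iff.mpr
    intro j hj
    rw [hs, Finset.mem_erase, Finset.mem_range] at hj
    intro h0
    exact hj.1 (hθ j (by omega) i hi (by linear_combination -h0))
  have evalp : ∀ j ≤ N, p.eval (θ j) = if j = i then c else 0 := by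
    intro j hj
    by_cases hji : j = i
    · subst hji
      simp only [if_pos rfl, hp, hc, Polynomial.eval_prod]
      exact Finset.prod_congr rfl fun k _ => by simp
    · rw [if_neg hji, hp, Polynomial.eval_prod]
      apply Finset.prod_eq_zero (i := j)
      · rw [hs, Finset.mem_erase, Finset.mem_range]; exact ⟨hji, by omega⟩
      · simp
  have key : ∀ (G : ℕ → Matrix n n ℂ),
      (∑ j ∈ Finset.range (N + 1), G j) = 1 →
      (∀ j ≤ N, M * G j = θ j • G j) →
      (Polynomial.aeval M) p = c • G i := by
    intro G hG eigG
    have h1 : (Polynomial.aeval M) p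
        = (Polynomial.aeval M) p * ∑ j ∈ Finset.range (N + 1), G j := by
      rw [hG, mul_one]
    rw [h1, Finset.mul_sum]
    have h2 : ∀ j ∈ Finset.range (N + 1),
        (Polynomial.aeval M) p * G j = (if j = i then c else 0) • G j := by
      intro j hj
      rw [Finset.mem_range] at hj
      rw [aeval_mul_eig M (G j) (θ j) (eigG j (by omega)) p, evalp j (by omega)]
    rw [Finset.sum_congr rfl h2]
    rw [Finset.sum_eq_single i]
    · simp
    · intro j hj hji
      simp [hji]
    · intro h
      exact absurd (Finset.mem_range.mpr (by omega)) h
  have hEi := key E hE eigE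
  have hFi := key F hF eigF
  have : c • E i = c • F i := by rw [← hEi, ← hFi]
  exact smul_right_injective _ hcne this

lemma restrict_mul {D : ℕ} (N : Matrix (Vtx D) (Vtx D) ℂ) :
    adjHalf D * N.submatrix Subtype.val Subtype.val
      = (Bmat D * N).submatrix (Subtype.val (p := fun x => Even (hammingNorm x)))
          Subtype.val := by
  classical
  ext y z
  rw [Matrix.mul_apply, Matrix.submatrix_apply, Matrix.mul_apply]
  have hzero : ∀ x ∈ Finset.univ.filter
      (fun x : Vtx D => ¬ Even (hammingNorm x)), Bmat D y.val x * N x z.val = 0 := by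
    intro x hx
    simp only [Finset.mem_filter] at hx
    have : Bmat D y.val x = 0 := by
      rw [Bmat]
      by_cases h : hammingNorm (y.val - x) = 2
      · exact absurd (parity_sub y.val x (by rw [h]; exact even_two) y.property) hx.2
      · rw [if_neg h]
    rw [this, zero_mul]
  rw [← Finset.sum_filter_add_sum_filter_not Finset.univ
    (fun x : Vtx D => Even (hammingNorm x)) (fun x => Bmat D y.val x * N x z.val)]
  rw [Finset.sum_congr rfl hzero, Finset.sum_const_zero, add_zero]
  rw [Finset.sum_subtype (p := fun x : Vtx D => Even (hammingNorm x))
    (Finset.univ.filter fun x : Vtx D => Even (hammingNorm x))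
    (by intro x; simp) (fun x => Bmat D y.val x * N x z.val)]
  apply Finset.sum_congr rfl
  intro x _
  simp [adjHalf, Bmat, Matrix.submatrix_apply]

lemma submatrix_one_even {D : ℕ} :
    (1 : Matrix (Vtx D) (Vtx D) ℂ).submatrix
      (Subtype.val (p := fun x => Even (hammingNorm x)))
      (Subtype.val (p := fun x => Even (hammingNorm x))) = 1 := by
  ext y z
  simp only [Matrix.submatrix_apply, Matrix.one_apply, Subtype.val_inj]

theorem stmt12 (D : ℕ) (hD : 3 ≤ D) (hDeven : Even D)
    (E' : ℕ → Matrix (Vtx D) (Vtx D) ℂ)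
    (hsum' : ∑ i ∈ Finset.range (D + 1), E' i = 1)
    (heig' : ∀ i ≤ D, adjCube D * E' i = ((D : ℂ) - 2 * i) • E' i)
    (E : ℕ → Matrix (HVtx D) (HVtx D) ℂ)
    (hsum : ∑ i ∈ Finset.range (D / 2 + 1), E i = 1)
    (heig : ∀ i ≤ D / 2,
      adjHalf D * E i = (((((D : ℂ) - 2 * i)) ^ 2 - D) / 2) • E i) :
    (∀ i ≤ D / 2 - 1, ∀ y z : HVtx D,
      E i y z = (E' i + E' (D - i)) y.val z.val) ∧
    (∀ y z : HVtx D, E (D / 2) y z = E' (D / 2) y.val z.val) := by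
  classical
  have hD2 : 2 * (D / 2) = D := Nat.two_mul_div_two_of_even hDeven
  -- eigen equations for Bmat
  have hBeig : ∀ j ≤ D, Bmat D * E' j = ((((D : ℂ) - 2 * j) ^ 2 - D) / 2) • E' j := by
    intro j hj
    have h2 : (2 : ℂ) • (Bmat D * E' j) = (((D : ℂ) - 2 * j) ^ 2 - (D : ℂ)) • E' j := by
      have := congrArg (· * E' j) (adjCube_sq D)
      simp only [add_mul, Matrix.smul_mul] at this
      rw [mul_assoc, heig' j hj, Matrix.mul_smul, heig' j hj, smul_smul, Matrix.one_mul] at this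
      have h3 : (2 : ℂ) • (Bmat D * E' j)
          = (((D:ℂ) - 2*j) * ((D:ℂ) - 2*j)) • E' j - (D : ℂ) • E' j :=
        eq_sub_of_add_eq this.symm
      rw [h3, ← sub_smul]
      congr 1
      ring
    have := congrArg (fun M => ((2 : ℂ)⁻¹) • M) h2
    simp only [smul_smul] at this
    rw [inv_mul_cancel₀ (two_ne_zero), one_smul] at this
    rw [this]
    congr 1
    ring
  -- the candidate family
  set F : ℕ → Matrix (HVtx D) (HVtx D) ℂ := fun i =>
    (∑ j ∈ ({i, D - i} : Finset ℕ), E' j).submatrix Subtype.val Subtype.val with hFdef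
  -- sum of the candidate family
  have hbiUnion : (Finset.range (D / 2 + 1)).biUnion (fun i => ({i, D - i} : Finset ℕ))
      = Finset.range (D + 1) := by
    ext j
    simp only [Finset.mem_biUnion, Finset.mem_range, Finset.mem_insert, Finset.mem_singleton]
    constructor
    · rintro ⟨i, hi, hj | hj⟩ <;> omega
    · intro hj
      by_cases h : j ≤ D / 2
      · exact ⟨j, by omega, Or.inl rfl⟩
      · exact ⟨D - j, by omega, Or.inr (by omega)⟩
  have hdisj : ∀ i ∈ Finset.range (D / 2 + 1), ∀ i' ∈ Finset.range (D / 2 + 1), i ≠ i' →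
      Disjoint ({i, D - i} : Finset ℕ) ({i', D - i'} : Finset ℕ) := by
    intro i hi i' hi' hne
    rw [Finset.mem_range] at hi hi'
    rw [Finset.disjoint_left]
    intro a ha ha'
    simp only [Finset.mem_insert, Finset.mem_singleton] at ha ha'
    omega
  have hFsum : ∑ i ∈ Finset.range (D / 2 + 1), F i = 1 := by
    have : ∑ i ∈ Finset.range (D / 2 + 1), ∑ j ∈ ({i, D - i} : Finset ℕ), E' j
        = ∑ j ∈ Finset.range (D + 1), E' j := by
      rw [← hbiUnion, Finset.sum_biUnion hdisj]
    calc ∑ i ∈ Finset.range (D / 2 + 1), F i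
        = (∑ i ∈ Finset.range (D / 2 + 1),
            ∑ j ∈ ({i, D - i} : Finset ℕ), E' j).submatrix Subtype.val Subtype.val := by
          rw [hFdef]
          ext y z
          simp [Matrix.submatrix_apply, Matrix.sum_apply]
      _ = 1 := by rw [this, hsum']; exact submatrix_one_even
  -- eigen equations for the candidate family
  have hFeig : ∀ i ≤ D / 2,
      adjHalf D * F i = ((((D : ℂ) - 2 * i) ^ 2 - D) / 2) • F i := by
    intro i hi
    rw [hFdef]
    rw [restrict_mul]
    have hmul : Bmat D * (∑ j ∈ ({i, D - i} : Finset ℕ), E' j)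
        = ((((D : ℂ) - 2 * i) ^ 2 - D) / 2) • (∑ j ∈ ({i, D - i} : Finset ℕ), E' j) := by
      rw [Finset.mul_sum, Finset.smul_sum]
      apply Finset.sum_congr rfl
      intro j hj
      simp only [Finset.mem_insert, Finset.mem_singleton] at hj
      rcases hj with rfl | rfl
      · exact hBeig j (by omega)
      · rw [hBeig (D - i) (by omega)]
        congr 2
        have : ((D - i : ℕ) : ℂ) = (D : ℂ) - (i : ℂ) := by
          push_cast [Nat.cast_sub (by omega : i ≤ D)]
          ring
        rw [this]
        ring
    rw [hmul]
    ext y z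
    simp [Matrix.submatrix_apply, Matrix.smul_apply]
  -- injectivity of the eigenvalues
  have hθinj : ∀ i ≤ D / 2, ∀ j ≤ D / 2,
      ((((D : ℂ) - 2 * i) ^ 2 - D) / 2) = ((((D : ℂ) - 2 * j) ^ 2 - D) / 2) → i = j := by
    intro i hi j hj hEq
    have hsq : ((D : ℂ) - 2 * i) ^ 2 = ((D : ℂ) - 2 * j) ^ 2 := by
      linear_combination 2 * hEq
    have hfac : (((D : ℂ) - 2 * i) - ((D : ℂ) - 2 * j))
        * (((D : ℂ) - 2 * i) + ((D : ℂ) - 2 * j)) = 0 := by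
      linear_combination hsq
    rcases mul_eq_zero.mp hfac with h | h
    · have : (2 * j : ℂ) = (2 * i : ℂ) := by linear_combination h
      have : (2 * j : ℕ) = (2 * i : ℕ) := by exact_mod_cast this
      omega
    · have : ((2 * D : ℕ) : ℂ) = ((2 * i + 2 * j : ℕ) : ℂ) := by
        push_cast
        linear_combination h
      have : (2 * D : ℕ) = 2 * i + 2 * j := by exact_mod_cast this
      omega
  -- uniqueness
  have huniq := unique_family (adjHalf D) (D / 2)
    (fun i => (((D : ℂ) - 2 * i) ^ 2 - D) / 2) hθinj E F hsum hFsum heig hFeig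
  constructor
  · intro i hi y z
    have hilt : i < D / 2 := by omega
    rw [huniq i (by omega)]
    have hne : i ≠ D - i := by omega
    simp only [hFdef, Matrix.submatrix_apply, Finset.sum_pair hne, Matrix.add_apply]
  · intro y z
    rw [huniq (D / 2) le_rfl]
    have hset : ({D / 2, D - D / 2} : Finset ℕ) = {D / 2} := by
      have h : D - D / 2 = D / 2 := by omega
      rw [h, Finset.insert_eq_self]
      exact Finset.mem_singleton_self _
    simp only [hFdef, Matrix.submatrix_apply, hset, Finset.sum_singleton]
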